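/- Let q be a prime power, k ≥ 2, and let D_1, D_2 ⊆ GF(q)^k both be vectorial cutting blocking sets (for every hyperplane H, D_i ∩ H spans H), with D_1 = a·D_1 for all a ∈ GF(q)^*. Define E ⊆ GF(q)^{k+1} as E = {(x,1) : x ∈ D_1} ∪ {(x,0) : x ∈ D_2}. Then E is a vectorial cutting blocking set in GF(q)^{k+1}: for any pair (a_1,b_1), (a_2,b_2) ∈ GF(q)^k × GF(q) that are linearly independent, there exists (x,y) ∈ E with ⟨a_1,x⟩ + b_1 y ≠ 0 and ⟨a_2,x⟩ + b_2 y = 0. -/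

import Mathlib

section Aux
variable {F : Type} [Field F] {k : ℕ}

def phiCB (a : Fin k → F) : (Fin k → F) →ₗ[F] F :=
  ∑ i, a i • LinearMap.proj i

lemma phiCB_apply (a x : Fin k → F) : phiCB a x = ∑ i, a i * x i := by
  simp [phiCB]

lemma phiCB_single [DecidableEq (Fin k)] (a : Fin k → F) (j : Fin k) (c : F) :
    phiCB a (Pi.single j c) = a j * c := by
  simp [phiCB_apply, Pi.single_apply, mul_ite, Finset.sum_ite_eq']

lemma phiCB_smul_arg (a : Fin k → F) (c : F) (x : Fin k → F) :
    phiCB a (c • x) = c * phiCB a x := by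
  rw [map_smul, smul_eq_mul]

lemma phiCB_smul (a : Fin k → F) (c : F) (x : Fin k → F) :
    phiCB (c • a) x = c * phiCB a x := by
  simp [phiCB_apply, Finset.mul_sum, mul_assoc]

lemma phiCB_surj (a : Fin k → F) (ha : a ≠ 0) : Function.Surjective (phiCB a) := by
  obtain ⟨j, hj⟩ := Function.ne_iff.mp ha
  intro c
  simp only [Pi.zero_apply] at hj
  refine ⟨Pi.single j (c / a j), ?_⟩
  classical
  rw [phiCB_single]
  field_simp

lemma finrank_ker_phiCB (a : Fin k → F) (ha : a ≠ 0) :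
    Module.finrank F (LinearMap.ker (phiCB a)) = k - 1 := by
  have h := LinearMap.finrank_range_add_finrank_ker (phiCB a)
  rw [LinearMap.range_eq_top.mpr (phiCB_surj a ha), finrank_top, Module.finrank_self] at h
  have hpi : Module.finrank F (Fin k → F) = k := by simp
  rw [hpi] at h
  omega

lemma keyCB (D : Set (Fin k → F))
    (h : ∀ H : Submodule F (Fin k → F), Module.finrank F H = k - 1 →
      Submodule.span F (D ∩ (H : Set (Fin k → F))) = H)
    (a b : Fin k → F) (hb : b ≠ 0) (w : Fin k → F)
    (hw0 : phiCB b w = 0) (hw1 : phiCB a w ≠ 0) :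
    ∃ x ∈ D, phiCB b x = 0 ∧ phiCB a x ≠ 0 := by
  have hH := h (LinearMap.ker (phiCB b)) (finrank_ker_phiCB b hb)
  by_contra hcon
  push_neg at hcon
  have hsub : (D ∩ (LinearMap.ker (phiCB b) : Set (Fin k → F))) ⊆
      (LinearMap.ker (phiCB a) : Set (Fin k → F)) := by
    rintro x ⟨hxD, hxH⟩
    exact hcon x hxD hxH
  have hle : LinearMap.ker (phiCB b) ≤ LinearMap.ker (phiCB a) := by
    conv_lhs => rw [← hH]
    exact Submodule.span_le.mpr hsub
  exact hw1 (hle hw0)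

lemma exists_ne_fin (hk : 2 ≤ k) (j : Fin k) : ∃ j' : Fin k, j' ≠ j := by
  have : 1 < Fintype.card (Fin k) := by simp; omega
  exact Fintype.exists_ne_of_one_lt_card this j

lemma exists_nonzero_CB (hk : 2 ≤ k) (D : Set (Fin k → F))
    (h : ∀ H : Submodule F (Fin k → F), Module.finrank F H = k - 1 →
      Submodule.span F (D ∩ (H : Set (Fin k → F))) = H)
    (a : Fin k → F) (ha : a ≠ 0) : ∃ x ∈ D, phiCB a x ≠ 0 := by
  classical
  obtain ⟨j, hj⟩ := Function.ne_iff.mp ha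
  obtain ⟨j', hj'⟩ := exists_ne_fin hk j
  have hb : (Pi.single j' 1 : Fin k → F) ≠ 0 := by
    intro hz
    have := congrFun hz j'
    simp at this
  obtain ⟨x, hxD, _, hxa⟩ := keyCB D h a (Pi.single j' 1) hb (Pi.single j 1)
    (by rw [phiCB_single]; simp [Pi.single_apply, hj'.symm]) (by rw [phiCB_single]; simpa using hj)
  exact ⟨x, hxD, hxa⟩

lemma of_ker_le_CB [DecidableEq (Fin k)] (a₁ a₂ : Fin k → F) (ha₂ : a₂ ≠ 0)
    (hle : ∀ w, phiCB a₂ w = 0 → phiCB a₁ w = 0) : ∃ c : F, a₁ = c • a₂ := by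
  obtain ⟨j, hj⟩ := Function.ne_iff.mp ha₂
  simp only [Pi.zero_apply] at hj
  refine ⟨a₁ j / a₂ j, funext fun i => ?_⟩
  have hv : phiCB a₂ (a₂ j • (Pi.single i 1 : Fin k → F) - a₂ i • (Pi.single j 1 : Fin k → F)) = 0 := by
    simp [map_sub, map_smul, phiCB_single]; ring
  have h1 := hle _ hv
  simp [map_sub, map_smul, phiCB_single] at h1
  have : a₂ j * a₁ i = a₂ i * a₁ j := by linear_combination h1
  rw [Pi.smul_apply, smul_eq_mul]
  field_simp
  linear_combination this
end Aux

theorem stmt_15 {F : Type} [Field F] [Fintype F] [DecidableEq F]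
    (q k : ℕ) (hq : Fintype.card F = q) (hk : 2 ≤ k)
    (D1 D2 : Set (Fin k → F))
    (h1 : ∀ H : Submodule F (Fin k → F), Module.finrank F H = k - 1 →
      Submodule.span F (D1 ∩ (H : Set (Fin k → F))) = H)
    (h2 : ∀ H : Submodule F (Fin k → F), Module.finrank F H = k - 1 →
      Submodule.span F (D2 ∩ (H : Set (Fin k → F))) = H)
    (hscal : ∀ a : F, a ≠ 0 → (fun x => a • x) '' D1 = D1)
    (a₁ a₂ : Fin k → F) (b₁ b₂ : F)
    (hind : LinearIndependent F ![((a₁, b₁) : (Fin k → F) × F), (a₂, b₂)]) :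
    ∃ p : (Fin k → F) × F,
      ((p.2 = 1 ∧ p.1 ∈ D1) ∨ (p.2 = 0 ∧ p.1 ∈ D2)) ∧
      (∑ i, a₁ i * p.1 i) + b₁ * p.2 ≠ 0 ∧ (∑ i, a₂ i * p.1 i) + b₂ * p.2 = 0 := by
  classical
  have hpair := LinearIndependent.pair_iff.mp hind
  by_cases ha₂ : a₂ = 0
  · -- Case 1
    have hb₂ : b₂ ≠ 0 := by
      intro hb₂
      have := (hpair 0 1 (by simp [ha₂, hb₂, Prod.ext_iff])).2
      exact one_ne_zero this
    have ha₁ : a₁ ≠ 0 := by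
      intro ha₁
      have := (hpair b₂ (-b₁) (by
        simp [ha₁, ha₂, Prod.ext_iff, Prod.smul_def]
        ring)).1
      exact hb₂ this
    obtain ⟨x, hxD, hxa⟩ := exists_nonzero_CB hk D2 h2 a₁ ha₁
    refine ⟨(x, 0), Or.inr ⟨rfl, hxD⟩, ?_, ?_⟩
    · simpa [← phiCB_apply] using hxa
    · simp [ha₂]
  · by_cases hdep : ∃ c : F, a₁ = c • a₂
    · -- Case 2
      obtain ⟨c, rfl⟩ := hdep
      have hb : b₁ ≠ c * b₂ := by
        intro hb
        have := (hpair 1 (-c) (by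
          simp [Prod.ext_iff, Prod.smul_def, hb])).1
        exact one_ne_zero this
      by_cases hb₂ : b₂ = 0
      · -- need x ∈ D1 with phi a₂ x = 0
        have hH := h1 (LinearMap.ker (phiCB a₂)) (finrank_ker_phiCB a₂ ha₂)
        have hne : (D1 ∩ (LinearMap.ker (phiCB a₂) : Set (Fin k → F))).Nonempty := by
          by_contra hemp
          rw [Set.not_nonempty_iff_eq_empty] at hemp
          rw [hemp, Submodule.span_empty] at hH
          have h0 : Module.finrank F (LinearMap.ker (phiCB a₂)) = 0 := by
            rw [← hH]; simp
          rw [finrank_ker_phiCB a₂ ha₂] at h0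
          omega
        obtain ⟨x, hxD, hxH⟩ := hne
        have hx0 : phiCB a₂ x = 0 := hxH
        refine ⟨(x, 1), Or.inl ⟨rfl, hxD⟩, ?_, ?_⟩
        · rw [← phiCB_apply, phiCB_smul, hx0]
          simpa [hb₂] using hb
        · rw [← phiCB_apply, hx0, hb₂]; ring
      · obtain ⟨x₀, hx₀D, hx₀⟩ := exists_nonzero_CB hk D1 h1 a₂ ha₂
        set t := phiCB a₂ x₀ with ht
        have hs : (-b₂ / t) ≠ 0 := by
          simp [hb₂, hx₀]
        have hxD : (-b₂ / t) • x₀ ∈ D1 := by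
          rw [← hscal _ hs]
          exact ⟨x₀, hx₀D, rfl⟩
        have hval : phiCB a₂ ((-b₂ / t) • x₀) = -b₂ := by
          rw [phiCB_smul_arg, ← ht]
          field_simp
        refine ⟨((-b₂ / t) • x₀, 1), Or.inl ⟨rfl, hxD⟩, ?_, ?_⟩
        · rw [← phiCB_apply, phiCB_smul, hval]
          intro hcon
          apply hb
          linear_combination hcon
        · rw [← phiCB_apply, hval]; ring
    · -- Case 3
      have hw : ∃ w, phiCB a₂ w = 0 ∧ phiCB a₁ w ≠ 0 := by
        by_contra hcon
        push_neg at hcon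
        exact hdep (of_ker_le_CB a₁ a₂ ha₂ hcon)
      obtain ⟨w, hw0, hw1⟩ := hw
      obtain ⟨x, hxD, hx0, hxa⟩ := keyCB D2 h2 a₁ a₂ ha₂ w hw0 hw1
      refine ⟨(x, 0), Or.inr ⟨rfl, hxD⟩, ?_, ?_⟩
      · simpa [← phiCB_apply] using hxa
      · simpa [← phiCB_apply] using hx0
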